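/- Calculus lemma (Li–Zhang, form (ii)): let n ≥ 1, ν ∈ ℝ, u ∈ C¹(ℝⁿ). If for every x₀ ∈ ℝⁿ and every λ > 0 one has (λ/|x-x₀|)^{ν} u(x₀ + λ²(x-x₀)/|x-x₀|²) ≥ u(x) for all x ∈ B_λ(x₀) \ {x₀}, then u is constant. -/

import Mathlib

/-- Calculus lemma (Li–Zhang, form (ii)): if `u ∈ C¹(ℝⁿ)` satisfies
`(λ/|x-x₀|)^ν u(x₀ + λ²(x-x₀)/|x-x₀|²) ≥ u(x)` for every `x₀`, every `λ > 0` and every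
`x ∈ B_λ(x₀) \ {x₀}`, then `u` is constant. -/
theorem stmt_15 (n : ℕ) (hn : 1 ≤ n) (ν : ℝ)
    (u : EuclideanSpace ℝ (Fin n) → ℝ) (hreg : ContDiff ℝ 1 u)
    (hdom : ∀ (x₀ : EuclideanSpace ℝ (Fin n)) (lam : ℝ), 0 < lam →
      ∀ x, x ≠ x₀ → ‖x - x₀‖ < lam →
        u x ≤ (lam / ‖x - x₀‖) ^ ν *
          u (x₀ + (lam ^ 2 / ‖x - x₀‖ ^ 2) • (x - x₀))) :
    ∃ c : ℝ, ∀ x, u x = c := by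
  have key : ∀ a b : EuclideanSpace ℝ (Fin n), u a ≤ u b := by
    intro a b
    rcases eq_or_ne a b with rfl | hab
    · exact le_refl _
    have hba : (0:ℝ) < ‖b - a‖ := by
      rw [norm_pos_iff]
      exact sub_ne_zero.mpr (Ne.symm hab)
    have h1 : ∀ t : ℝ, 0 < t → u a ≤ (Real.sqrt (1 + 1/t)) ^ ν * u b := by
      intro t ht
      set x₀ : EuclideanSpace ℝ (Fin n) := a - t • (b - a) with hx₀
      have hax : a - x₀ = t • (b - a) := by rw [hx₀]; abel
      have hnorm : ‖a - x₀‖ = t * ‖b - a‖ := by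
        rw [hax, norm_smul, Real.norm_eq_abs, abs_of_pos ht]
      have hs : (0:ℝ) < 1 + 1/t := by positivity
      set lam : ℝ := Real.sqrt (1 + 1/t) * (t * ‖b - a‖) with hlamdef
      have hlampos : 0 < lam := by
        apply mul_pos (Real.sqrt_pos.mpr hs) (mul_pos ht hba)
      have hane : a ≠ x₀ := by
        intro h
        have : a - x₀ = 0 := sub_eq_zero.mpr h
        rw [hax] at this
        have := smul_eq_zero.mp this
        rcases this with h' | h'
        · exact ht.ne' h'
        · exact hab (sub_eq_zero.mp h').symm
      have hsqrt1 : (1:ℝ) < Real.sqrt (1 + 1/t) := by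
        rw [show Real.sqrt (1 + 1/t) = Real.sqrt (1 + 1/t) from rfl]
        have : (1:ℝ) ^ 2 < 1 + 1/t := by nlinarith [one_div_pos.mpr ht]
        exact (Real.lt_sqrt (by norm_num)).mpr (by simpa using this)
      have hlt : ‖a - x₀‖ < lam := by
        rw [hnorm, hlamdef]
        nlinarith [mul_pos ht hba]
      have H := hdom x₀ lam hlampos a hane hlt
      have hratio : lam / ‖a - x₀‖ = Real.sqrt (1 + 1/t) := by
        rw [hnorm, hlamdef]
        field_simp
      have hsq : lam ^ 2 / ‖a - x₀‖ ^ 2 = 1 + 1/t := by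
        rw [hnorm, hlamdef, mul_pow, Real.sq_sqrt hs.le]
        field_simp
      have himg : x₀ + (lam ^ 2 / ‖a - x₀‖ ^ 2) • (a - x₀) = b := by
        rw [hsq, hax, hx₀, smul_smul]
        have : (1 + 1/t) * t = 1 + t := by field_simp; ring
        rw [this]
        rw [show (1 + t) • (b - a) = (b - a) + t • (b - a) by
          rw [add_smul, one_smul]]
        abel
      rw [hratio, himg] at H
      exact H
    have htend : Filter.Tendsto (fun t : ℝ => (Real.sqrt (1 + 1/t)) ^ ν * u b)
        Filter.atTop (nhds (u b)) := by
      have h0 : Filter.Tendsto (fun t : ℝ => 1 + 1/t) Filter.atTop (nhds 1) := by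
        have : Filter.Tendsto (fun n : ℕ => 1 / (n : ℝ)) Filter.atTop (nhds 0) := tendsto_one_div_atTop_nhds_zero_nat
        have h := Filter.Tendsto.const_add (1:ℝ) tendsto_inv_atTop_zero
        simpa [one_div] using h
      have h1' : Filter.Tendsto (fun t : ℝ => Real.sqrt (1 + 1/t)) Filter.atTop (nhds 1) := by
        have := (Real.continuous_sqrt.tendsto 1).comp h0
        simpa [Function.comp_def] using this
      have h2 : Filter.Tendsto (fun t : ℝ => (Real.sqrt (1 + 1/t)) ^ ν) Filter.atTop
          (nhds 1) := by
        have := h1'.rpow_const (p := ν) (Or.inl one_ne_zero)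
        simpa using this
      simpa using h2.mul_const (u b)
    refine ge_of_tendsto htend ?_
    filter_upwards [Filter.eventually_gt_atTop 0] with t ht using h1 t ht
  exact ⟨u 0, fun x => le_antisymm (key x 0) (key 0 x)⟩
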